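/- Let a finite group G = A₁A₂⋯A_k be a product of nilpotent subgroups A₁, …, A_k such that A_i is normalised by A_j whenever 1 ≤ i < j ≤ k. Fix a prime p and let P_i be the (unique) Sylow p-subgroup of A_i for each i. Then the product P₁P₂⋯P_k is a Sylow p-subgroup of G. -/

import Mathlib

open scoped Pointwise

section AuxProdSylow

variable {G : Type*} [Group G]

private def mulSubgroupAux (H K : Subgroup G) (hK : K ≤ Subgroup.normalizer (H : Set G)) : Subgroup G where
  carrier := (H : Set G) * (K : Set G)
  one_mem' := ⟨1, H.one_mem, 1, K.one_mem, mul_one 1⟩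
  mul_mem' := by
    rintro _ _ ⟨h1, hh1, k1, hk1, rfl⟩ ⟨h2, hh2, k2, hk2, rfl⟩
    refine ⟨h1 * (k1 * h2 * k1⁻¹), mul_mem hh1 ?_, k1 * k2, mul_mem hk1 hk2, by group⟩
    exact ((Subgroup.mem_normalizer_iff.mp (hK hk1)) h2).mp hh2
  inv_mem' := by
    rintro _ ⟨h1, hh1, k1, hk1, rfl⟩
    refine ⟨k1⁻¹ * h1⁻¹ * k1, ?_, k1⁻¹, inv_mem hk1, by group⟩
    have := ((Subgroup.mem_normalizer_iff.mp (hK (inv_mem hk1))) h1⁻¹).mp (inv_mem hh1)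
    simpa using this

private lemma coe_sup_eq_mul {H K : Subgroup G} (hK : K ≤ Subgroup.normalizer (H : Set G)) :
    ((H ⊔ K : Subgroup G) : Set G) = (H : Set G) * (K : Set G) := by
  have h : H ⊔ K = mulSubgroupAux H K hK := by
    apply le_antisymm
    · exact sup_le (fun h hh => ⟨h, hh, 1, K.one_mem, mul_one h⟩)
        (fun k hk => ⟨1, H.one_mem, k, hk, one_mul k⟩)
    · rintro _ ⟨h, hh, k, hk, rfl⟩
      exact mul_mem ((le_sup_left : H ≤ H ⊔ K) hh) ((le_sup_right : K ≤ H ⊔ K) hk)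
  rw [h]; rfl

private lemma card_sup_mul_card_inf [Finite G] (H K : Subgroup G) (hK : K ≤ Subgroup.normalizer (H : Set G)) :
    Nat.card (H ⊔ K : Subgroup G) * Nat.card (H ⊓ K : Subgroup G) =
      Nat.card H * Nat.card K := by
  set N := Subgroup.normalizer (H : Set G) with hN
  set H' := H.subgroupOf N with hH'
  set K' := K.subgroupOf N with hK'
  haveI : H'.Normal := Subgroup.normal_in_normalizer
  have e := QuotientGroup.quotientInfEquivProdNormalQuotient K' H'
  have h1 : Nat.card K' = Nat.card (K' ⧸ H'.subgroupOf K') * Nat.card (H'.subgroupOf K') :=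
    Subgroup.card_eq_card_quotient_mul_card_subgroup _
  have h2 : Nat.card (K' ⊔ H' : Subgroup N) =
      Nat.card ((K' ⊔ H' : Subgroup N) ⧸ H'.subgroupOf (K' ⊔ H')) *
        Nat.card (H'.subgroupOf (K' ⊔ H')) :=
    Subgroup.card_eq_card_quotient_mul_card_subgroup _
  have hq : Nat.card (K' ⧸ H'.subgroupOf K') =
      Nat.card ((K' ⊔ H' : Subgroup N) ⧸ H'.subgroupOf (K' ⊔ H')) := Nat.card_congr e.toEquiv
  -- identify all the cards
  have hcard : ∀ (X : Subgroup G) (hX : X ≤ N), Nat.card (X.subgroupOf N) = Nat.card X :=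
    fun X hX => Nat.card_congr (Subgroup.subgroupOfEquivOfLe hX).toEquiv
  have hKN : K ≤ N := hK
  have hHN : H ≤ N := Subgroup.le_normalizer
  have hsub1 : Nat.card (H'.subgroupOf K') = Nat.card (H ⊓ K : Subgroup G) := by
    have hinf : H' ⊓ K' = (H ⊓ K).subgroupOf N := by
      rw [hH', hK']; exact (Subgroup.comap_inf _ _ _).symm
    have h3 : H'.subgroupOf K' = ((H ⊓ K).subgroupOf N).subgroupOf K' := by
      rw [← Subgroup.inf_subgroupOf_right H' K', hinf]
    have hle : (H ⊓ K).subgroupOf N ≤ K' := by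
      rw [hK']; exact Subgroup.comap_mono inf_le_right
    rw [h3, Nat.card_congr (Subgroup.subgroupOfEquivOfLe hle).toEquiv]
    exact hcard _ (inf_le_right.trans hKN)
  have hsub2 : Nat.card (H'.subgroupOf (K' ⊔ H')) = Nat.card H := by
    rw [Nat.card_congr (Subgroup.subgroupOfEquivOfLe (le_sup_right : H' ≤ K' ⊔ H')).toEquiv]
    exact hcard _ hHN
  have hsup : Nat.card (K' ⊔ H' : Subgroup N) = Nat.card (K ⊔ H : Subgroup G) := by
    rw [hK', hH', ← Subgroup.subgroupOf_sup hKN hHN]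
    exact hcard _ ((sup_le hKN hHN))
  have hKcard : Nat.card K' = Nat.card K := hcard _ hKN
  rw [sup_comm H K, ← hsup, h2, ← hq, hsub2, ← hKcard, h1, hsub1]
  ring

private lemma map_conj_eq_of_mem_normalizer {K : Subgroup G} {x : G} (hx : x ∈ Subgroup.normalizer (K : Set G)) :
    K.map (MulAut.conj x).toMonoidHom = K := by
  apply le_antisymm
  · rintro _ ⟨g, hg, rfl⟩
    simpa using (Subgroup.mem_normalizer_iff.mp hx g).mp hg
  · intro g hg
    refine ⟨x⁻¹ * g * x, ?_, by simp [mul_assoc]⟩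
    have := (Subgroup.mem_normalizer_iff.mp (inv_mem hx) g).mp hg
    simpa using this

private lemma le_normalizer_iSup {ι : Sort*} {f : ι → Subgroup G} {a : Subgroup G}
    (h : ∀ i, a ≤ Subgroup.normalizer (f i : Set G)) : a ≤ Subgroup.normalizer ((⨆ i, f i : Subgroup G) : Set G) := by
  intro x hx
  have hmap : (⨆ i, f i).map (MulAut.conj x).toMonoidHom = ⨆ i, f i := by
    rw [Subgroup.map_iSup]
    exact iSup_congr fun i => map_conj_eq_of_mem_normalizer (h i hx)
  rw [Subgroup.mem_normalizer_iff]
  intro g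
  constructor
  · intro hg
    have := Subgroup.mem_map_of_mem (MulAut.conj x).toMonoidHom hg
    rw [hmap] at this
    simpa using this
  · intro hg
    rw [← hmap] at hg
    obtain ⟨g', hg', hgg⟩ := hg
    have hg'g : g' = g := by
      have : (MulAut.conj x) g' = (MulAut.conj x) g := by simpa using hgg
      exact (MulAut.conj x).injective this
    exact hg'g ▸ hg'

private lemma normalizer_le_normalizer_part {p : ℕ} {a q : Subgroup G} (hq : IsPGroup p q)
    (hqa : q ≤ a) (habs : ∀ R : Subgroup G, IsPGroup p R → R ≤ a → R ≤ q) :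
    Subgroup.normalizer (a : Set G) ≤ Subgroup.normalizer (q : Set G) := by
  have key : ∀ y : G, y ∈ Subgroup.normalizer (a : Set G) → q.map (MulAut.conj y).toMonoidHom ≤ q := by
    intro y hy
    refine habs _ (hq.map _) ?_
    rintro _ ⟨g, hg, rfl⟩
    simpa using (Subgroup.mem_normalizer_iff.mp hy g).mp (hqa hg)
  intro x hx
  rw [Subgroup.mem_normalizer_iff]
  intro g
  constructor
  · intro hg
    have := key x hx (Subgroup.mem_map_of_mem (MulAut.conj x).toMonoidHom hg)
    simpa using this
  · intro hg
    have := key x⁻¹ (inv_mem hx) (Subgroup.mem_map_of_mem (MulAut.conj x⁻¹).toMonoidHom hg)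
    simpa [mul_assoc] using this

private lemma card_inf_part [Finite G] {p : ℕ} [Fact p.Prime] {a q : Subgroup G}
    (hq : IsPGroup p q) (hqa : q ≤ a)
    (habs : ∀ R : Subgroup G, IsPGroup p R → R ≤ a → R ≤ q)
    {B : Subgroup G} (hB : B ≤ a) :
    Nat.card (B ⊓ q : Subgroup G) = p ^ (Nat.card B).factorization p := by
  obtain ⟨R⟩ : Nonempty (Sylow p B) := Sylow.nonempty
  have hmapR : (R : Subgroup B).map B.subtype ≤ B ⊓ q :=
    le_inf (Subgroup.map_subtype_le _)
      (habs _ (R.2.map _) ((Subgroup.map_subtype_le _).trans hB))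
  have hcardR : Nat.card ((R : Subgroup B).map B.subtype) =
      p ^ (Nat.card B).factorization p := by
    rw [← Nat.card_congr ((R : Subgroup B).equivMapOfInjective B.subtype
      B.subtype_injective).toEquiv]
    exact R.card_eq_multiplicity
  have hpBq : IsPGroup p (B ⊓ q : Subgroup G) := by
    rw [inf_comm]; exact hq.to_inf_left
  obtain ⟨n, hn⟩ := IsPGroup.iff_card.mp hpBq
  have hdvd : Nat.card (B ⊓ q : Subgroup G) ∣ Nat.card B :=
    Subgroup.card_dvd_of_le inf_le_left
  have hnv : n ≤ (Nat.card B).factorization p := by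
    rw [← Nat.Prime.pow_dvd_iff_le_factorization Fact.out Nat.card_pos.ne']
    exact hn ▸ hdvd
  have hvn : (Nat.card B).factorization p ≤ n := by
    rw [← Nat.pow_dvd_pow_iff_le_right (Fact.out : p.Prime).one_lt, ← hn, ← hcardR]
    exact Subgroup.card_dvd_of_le hmapR
  rw [hn, le_antisymm hnv hvn]

private lemma iSup_fin_succ {α : Type*} [CompleteLattice α] {m : ℕ} (f : Fin (m + 1) → α) :
    (⨆ i, f i) = (⨆ i : Fin m, f i.castSucc) ⊔ f (Fin.last m) := by
  apply le_antisymm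
  · refine iSup_le fun i => ?_
    induction i using Fin.lastCases with
    | last => exact le_sup_right
    | cast i => exact (le_iSup (fun i : Fin m => f i.castSucc) i).trans le_sup_left
  · exact sup_le (iSup_le fun i => le_iSup f i.castSucc) (le_iSup f (Fin.last m))

private lemma part_of_nilpotent [Finite G] {p : ℕ} [Fact p.Prime] {a q : Subgroup G}
    (hnil : Group.IsNilpotent a) (Q : Sylow p a) (hQ : (Q : Subgroup a).map a.subtype = q) :
    IsPGroup p q ∧ q ≤ a ∧ ∀ R : Subgroup G, IsPGroup p R → R ≤ a → R ≤ q := by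
  subst hQ
  refine ⟨Q.2.map _, Subgroup.map_subtype_le _, fun R hR hRa => ?_⟩
  haveI : Finite (Subgroup G) := Finite.of_injective _ SetLike.coe_injective
  haveI : Finite (Sylow p G) :=
    Finite.of_injective (fun P : Sylow p G => (P : Subgroup G))
      (fun P1 P2 h => Sylow.ext h)
  have htfae := (isNilpotent_of_finite_tfae (G := ↥a)).out 0 3
  have hQn : (Q : Subgroup a).Normal := htfae.mp hnil p ‹Fact p.Prime› Q
  haveI := Sylow.unique_of_normal Q hQn
  have hR' : IsPGroup p (R.subgroupOf a) := hR.comap_subtype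
  obtain ⟨Q2, hQ2⟩ := hR'.exists_le_sylow
  have hQ2Q : Q2 = Q := Subsingleton.elim _ _
  have hle : R.subgroupOf a ≤ (Q : Subgroup a) := hQ2Q ▸ hQ2
  have : (R.subgroupOf a).map a.subtype ≤ (Q : Subgroup a).map a.subtype :=
    Subgroup.map_mono hle
  rwa [Subgroup.subgroupOf_map_subtype, inf_eq_left.mpr hRa] at this

end AuxProdSylow

/-- if `G = A₀A₁⋯A_{k-1}` with each `Aᵢ` nilpotent and `Aᵢ` normalised
by `Aⱼ` for `i < j`, and `Pᵢ` is the (unique) Sylow `p`-subgroup of `Aᵢ`, then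
`P₀P₁⋯P_{k-1}` is a Sylow `p`-subgroup of `G`. -/
theorem prod_sylow_is_sylow
    {G : Type*} [Group G] [Finite G] {k : ℕ} (A : Fin k → Subgroup G)
    (hnil : ∀ i, Group.IsNilpotent (A i))
    (hprod : (List.ofFn fun i => ((A i : Subgroup G) : Set G)).prod = Set.univ)
    (hnorm : ∀ i j : Fin k, i < j → A j ≤ Subgroup.normalizer (A i : Set G))
    (p : ℕ) (hp : p.Prime)
    (P : Fin k → Subgroup G)
    (hP : ∀ i, ∃ Q : Sylow p (A i), ((Q : Subgroup (A i)).map (A i).subtype) = P i) :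
    ∃ S : Sylow p G, ((S : Subgroup G) : Set G) =
      (List.ofFn fun i => ((P i : Subgroup G) : Set G)).prod := by
  haveI : Fact p.Prime := ⟨hp⟩
  have key : ∀ i, IsPGroup p (P i) ∧ P i ≤ A i ∧
      ∀ R : Subgroup G, IsPGroup p R → R ≤ A i → R ≤ P i := by
    intro i
    obtain ⟨Q, hQ⟩ := hP i
    exact part_of_nilpotent (hnil i) Q hQ
  have main : ∀ m (hm : m ≤ k), ∃ H S : Subgroup G,
      H = (⨆ i : Fin m, A (Fin.castLE hm i)) ∧ S = (⨆ i : Fin m, P (Fin.castLE hm i)) ∧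
      (H : Set G) =
        (List.ofFn fun i : Fin m => ((A (Fin.castLE hm i) : Subgroup G) : Set G)).prod ∧
      (S : Set G) =
        (List.ofFn fun i : Fin m => ((P (Fin.castLE hm i) : Subgroup G) : Set G)).prod ∧
      S ≤ H ∧ IsPGroup p S ∧ Nat.card S = p ^ (Nat.card H).factorization p := by
    intro m
    induction m with
    | zero =>
      intro hm
      refine ⟨⊥, ⊥, (iSup_of_empty _).symm, (iSup_of_empty _).symm, by simp [Set.singleton_one],
        by simp [Set.singleton_one], le_rfl, IsPGroup.of_bot, by simp⟩
    | succ m ih =>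
      intro hm
      have hm' : m ≤ k := Nat.le_of_succ_le hm
      obtain ⟨H, S, hHdef, hSdef, hHset, hSset, hSH, hSp, hScard⟩ := ih hm'
      set j : Fin k := ⟨m, hm⟩ with hj
      have hlt : ∀ i : Fin m, Fin.castLE hm' i < j := fun i => i.isLt
      have haH : A j ≤ Subgroup.normalizer (H : Set G) := by
        rw [hHdef]
        exact le_normalizer_iSup fun i => hnorm _ j (hlt i)
      have haS : A j ≤ Subgroup.normalizer (S : Set G) := by
        rw [hSdef]
        refine le_normalizer_iSup fun i => ?_
        exact (hnorm _ j (hlt i)).trans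
          (normalizer_le_normalizer_part (key _).1 (key _).2.1 (key _).2.2)
      have hqa : P j ≤ A j := (key j).2.1
      have hqp : IsPGroup p (P j) := (key j).1
      have hqS : P j ≤ Subgroup.normalizer (S : Set G) := hqa.trans haS
      -- the inf computations
      have hHq_le_S : H ⊓ P j ≤ S := by
        have hR : IsPGroup p (H ⊓ P j : Subgroup G) := by
          rw [inf_comm]; exact hqp.to_inf_left
        have hRS : H ⊓ P j ≤ Subgroup.normalizer (S : Set G) := (inf_le_right.trans hqa).trans haS
        have hsupp : IsPGroup p (S ⊔ (H ⊓ P j) : Subgroup G) :=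
          IsPGroup.to_sup_of_normal_left' hSp hR hRS
        obtain ⟨n, hn⟩ := IsPGroup.iff_card.mp hsupp
        have hnle : Nat.card (S ⊔ (H ⊓ P j) : Subgroup G) ∣ p ^ (Nat.card H).factorization p := by
          rw [hn]
          refine pow_dvd_pow p ?_
          rw [← Nat.Prime.pow_dvd_iff_le_factorization hp Nat.card_pos.ne', ← hn]
          exact Subgroup.card_dvd_of_le (sup_le hSH inf_le_left)
        have hSle : Nat.card S ∣ Nat.card (S ⊔ (H ⊓ P j) : Subgroup G) :=
          Subgroup.card_dvd_of_le le_sup_left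
        have hcards : Nat.card (S ⊔ (H ⊓ P j) : Subgroup G) = Nat.card S := by
          refine Nat.dvd_antisymm ?_ hSle
          rw [hScard]; exact hnle
        have hSeq : S = S ⊔ (H ⊓ P j) :=
          Subgroup.eq_of_le_of_card_ge le_sup_left (le_of_eq hcards)
        exact le_sup_right.trans (le_of_eq hSeq.symm)
      have hSq_eq : S ⊓ P j = H ⊓ P j :=
        le_antisymm (inf_le_inf_right _ hSH) (le_inf hHq_le_S inf_le_right)
      have hHq_card : Nat.card (H ⊓ P j : Subgroup G) =
          p ^ (Nat.card (H ⊓ A j : Subgroup G)).factorization p := by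
        have h := card_inf_part hqp hqa (key j).2.2 (B := H ⊓ A j) inf_le_right
        rw [inf_assoc, inf_eq_right.mpr hqa] at h
        · exact h
      have hacard : Nat.card (P j) = p ^ (Nat.card (A j)).factorization p := by
        have h := card_inf_part hqp hqa (key j).2.2 (B := A j) le_rfl
        rwa [inf_eq_right.mpr hqa] at h
      -- cardinal arithmetic
      have h1 := card_sup_mul_card_inf H (A j) haH
      have h2 := card_sup_mul_card_inf S (P j) hqS
      have hfact : (Nat.card (H ⊔ A j : Subgroup G)).factorization p +
          (Nat.card (H ⊓ A j : Subgroup G)).factorization p =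
          (Nat.card H).factorization p + (Nat.card (A j)).factorization p := by
        rw [← Finsupp.add_apply, ← Finsupp.add_apply,
          ← Nat.factorization_mul Nat.card_pos.ne' Nat.card_pos.ne',
          ← Nat.factorization_mul Nat.card_pos.ne' Nat.card_pos.ne', h1]
      have hcardS' : Nat.card (S ⊔ P j : Subgroup G) =
          p ^ (Nat.card (H ⊔ A j : Subgroup G)).factorization p := by
        have h2' : Nat.card (S ⊔ P j : Subgroup G) *
            p ^ (Nat.card (H ⊓ A j : Subgroup G)).factorization p =
            p ^ (Nat.card (H ⊔ A j : Subgroup G)).factorization p *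
            p ^ (Nat.card (H ⊓ A j : Subgroup G)).factorization p := by
          calc Nat.card (S ⊔ P j : Subgroup G) *
              p ^ (Nat.card (H ⊓ A j : Subgroup G)).factorization p
              = Nat.card (S ⊔ P j : Subgroup G) * Nat.card (S ⊓ P j : Subgroup G) := by
                rw [hSq_eq, hHq_card]
            _ = Nat.card S * Nat.card (P j) := h2
            _ = p ^ ((Nat.card H).factorization p + (Nat.card (A j)).factorization p) := by
                rw [hScard, hacard, pow_add]
            _ = p ^ ((Nat.card (H ⊔ A j : Subgroup G)).factorization p +
                (Nat.card (H ⊓ A j : Subgroup G)).factorization p) := by rw [hfact]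
            _ = _ := pow_add p _ _
        exact Nat.eq_of_mul_eq_mul_right (pow_pos hp.pos _) h2'
      refine ⟨H ⊔ A j, S ⊔ P j, ?_, ?_, ?_, ?_, sup_le_sup hSH hqa, 
        IsPGroup.to_sup_of_normal_left' hSp hqp hqS, hcardS'⟩
      · rw [iSup_fin_succ (fun i : Fin (m+1) => A (Fin.castLE hm i)), hHdef]
        rfl
      · rw [iSup_fin_succ (fun i : Fin (m+1) => P (Fin.castLE hm i)), hSdef]
        rfl
      · rw [List.ofFn_succ', List.prod_concat, coe_sup_eq_mul haH]
        exact congrArg (· * ((A j : Subgroup G) : Set G)) hHset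
      · rw [List.ofFn_succ', List.prod_concat, coe_sup_eq_mul hqS]
        exact congrArg (· * ((P j : Subgroup G) : Set G)) hSset
  obtain ⟨H, S, hHdef, hSdef, hHset, hSset, hSH, hSp, hScard⟩ := main k le_rfl
  have hHtop : H = ⊤ := by
    rw [← Subgroup.coe_eq_univ, hHset]
    exact hprod
  have hcard : Nat.card S = p ^ (Nat.card G).factorization p := by
    rw [hScard, hHtop, Subgroup.card_top]
  exact ⟨Sylow.ofCard S hcard, hSset⟩
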